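/- arXiv:math/0702358 — 2 statements merged into one kernel-verified Lean document; each statement's English description precedes it below -/
import Mathlib

section
/- (Law of Large Numbers under sublinear expectation) Let X_1, X_2, ... be a sequence in H_2 with E[X_i^2] = σ̄² for all i and E[X_i X_{i+j}] = E[-X_i X_{i+j}] = 0 for all i, j ≥ 1, where σ̄ ∈ (0,∞). Set S_n = X_1 + ⋯ + X_n. Then E[|S_n/n|²] ≤ σ̄²/n for all n ≥ 1, and hence E[|S_n/n|²] → 0 as n → ∞. -/
open Filter

variable {Ω : Type*}

/-- Law of Large Numbers under a sublinear expectation. The sequence is indexed so that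
`X 1, X 2, ...` are the random variables and `S n = X 1 + ⋯ + X n`. -/
theorem sublinear_LLN (E : (Ω → ℝ) → ℝ)
    (mono : ∀ X Y : Ω → ℝ, (∀ ω, X ω ≤ Y ω) → E X ≤ E Y)
    (subadd : ∀ X Y : Ω → ℝ, E (X + Y) ≤ E X + E Y)
    (poshom : ∀ (l : ℝ) (X : Ω → ℝ), 0 ≤ l → E (l • X) = l * E X)
    (transl : ∀ (X : Ω → ℝ) (c : ℝ), E (X + fun _ => c) = E X + c)
    (X : ℕ → Ω → ℝ) (σ : ℝ) (hσ : 0 < σ)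
    (hvar : ∀ i : ℕ, 1 ≤ i → E (fun ω => (X i ω) ^ 2) = σ ^ 2)
    (huncorr : ∀ i j : ℕ, 1 ≤ i → 1 ≤ j →
      E (fun ω => X i ω * X (i + j) ω) = 0 ∧ E (fun ω => -(X i ω * X (i + j) ω)) = 0)
    (S : ℕ → Ω → ℝ) (hS : ∀ n, S n = fun ω => ∑ i ∈ Finset.Icc 1 n, X i ω) :
    (∀ n : ℕ, 1 ≤ n → E (fun ω => |S n ω / n| ^ 2) ≤ σ ^ 2 / n) ∧
      Tendsto (fun n : ℕ => E (fun ω => |S n ω / n| ^ 2)) atTop (nhds 0) := by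
  -- E of the zero function is 0
  have E0 : E 0 = 0 := by
    have h := poshom 0 0 le_rfl
    simpa using h
  -- null functions
  have null_add : ∀ Y Z : Ω → ℝ, E Y = 0 → E (-Y) = 0 → E Z = 0 → E (-Z) = 0 →
      E (Y + Z) = 0 ∧ E (-(Y + Z)) = 0 := by
    intro Y Z hY hY' hZ hZ'
    have h1 : E (Y + Z) ≤ 0 := by
      have := subadd Y Z; rw [hY, hZ] at this; linarith
    have h2 : E (-(Y + Z)) ≤ 0 := by
      have := subadd (-Y) (-Z); rw [hY', hZ'] at this
      have e : -Y + -Z = -(Y + Z) := by ring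
      rw [e] at this; linarith
    have h3 : (0:ℝ) ≤ E (Y + Z) + E (-(Y + Z)) := by
      have h := subadd (Y + Z) (-(Y + Z))
      have e : (Y + Z) + -(Y + Z) = 0 := by ring
      rw [e, E0] at h; linarith
    constructor <;> linarith
  -- strip a null summand
  have strip : ∀ Z Y : Ω → ℝ, E Y = 0 → E (-Y) = 0 → E (Z + Y) = E Z := by
    intro Z Y hY hY'
    have h1 : E (Z + Y) ≤ E Z := by
      have := subadd Z Y; rw [hY] at this; linarith
    have h2 : E Z ≤ E (Z + Y) := by
      have := subadd (Z + Y) (-Y)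
      have e : Z + Y + -Y = Z := by ring
      rw [e, hY'] at this; linarith
    linarith
  -- the cross terms are null
  have cross : ∀ n : ℕ, ∀ i ∈ Finset.Icc 1 n,
      E (fun ω => 2 * (X i ω * X (n + 1) ω)) = 0 ∧
      E (-(fun ω => 2 * (X i ω * X (n + 1) ω))) = 0 := by
    intro n i hi
    simp only [Finset.mem_Icc] at hi
    obtain ⟨hi1, hin⟩ := hi
    have hj : 1 ≤ n + 1 - i := by omega
    have hij : i + (n + 1 - i) = n + 1 := by omega
    obtain ⟨h1, h2⟩ := huncorr i (n + 1 - i) hi1 hj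
    rw [hij] at h1 h2
    constructor
    · have := poshom 2 (fun ω => X i ω * X (n + 1) ω) (by norm_num)
      rw [h1] at this
      have e : (2 : ℝ) • (fun ω => X i ω * X (n + 1) ω) =
          (fun ω => 2 * (X i ω * X (n + 1) ω)) := by
        funext ω; simp [smul_eq_mul]
      rw [e] at this
      simpa [smul_eq_mul] using this
    · have := poshom 2 (fun ω => -(X i ω * X (n + 1) ω)) (by norm_num)
      rw [h2] at this
      have e : (2 : ℝ) • (fun ω => -(X i ω * X (n + 1) ω)) =
          -(fun ω => 2 * (X i ω * X (n + 1) ω)) := by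
        funext ω; simp [smul_eq_mul]
      rw [e] at this
      simpa using this
  -- sums of null functions are null
  have null_sum : ∀ (s : Finset ℕ) (Y : ℕ → Ω → ℝ),
      (∀ i ∈ s, E (Y i) = 0 ∧ E (-(Y i)) = 0) →
      E (∑ i ∈ s, Y i) = 0 ∧ E (-(∑ i ∈ s, Y i)) = 0 := by
    intro s
    induction s using Finset.induction with
    | empty => intro Y _; simp [E0]
    | insert a t hni ih =>
      intro Y h
      rw [Finset.sum_insert hni]
      have ha := h a (Finset.mem_insert_self a t)
      have ht := ih Y (fun i hi => h i (Finset.mem_insert_of_mem hi))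
      exact null_add _ _ ha.1 ha.2 ht.1 ht.2
  -- key bound : E[S_n^2] ≤ n σ²
  have key : ∀ n : ℕ, E (fun ω => (S n ω) ^ 2) ≤ n * σ ^ 2 := by
    intro n
    induction n with
    | zero =>
      have : (fun ω => (S 0 ω) ^ 2) = (0 : Ω → ℝ) := by
        funext ω; rw [hS 0]; simp
      rw [this, E0]; simp
    | succ n ih =>
      have hsplit : ∀ ω, S (n + 1) ω = S n ω + X (n + 1) ω := by
        intro ω
        rw [hS (n + 1), hS n]
        exact Finset.sum_Icc_succ_top (by omega) _
      have hdecomp : (fun ω => (S (n + 1) ω) ^ 2) =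
          (fun ω => (S n ω) ^ 2 + (X (n + 1) ω) ^ 2) +
          ∑ i ∈ Finset.Icc 1 n, (fun ω => 2 * (X i ω * X (n + 1) ω)) := by
        funext ω
        simp only [Pi.add_apply, Finset.sum_apply, hsplit ω, hS n]
        rw [← Finset.mul_sum, ← Finset.sum_mul]
        ring_nf
      have hnull := null_sum (Finset.Icc 1 n) _ (cross n)
      rw [hdecomp, strip _ _ hnull.1 hnull.2]
      calc E ((fun ω => (S n ω) ^ 2) + (fun ω => (X (n + 1) ω) ^ 2))
          ≤ E (fun ω => (S n ω) ^ 2) + E (fun ω => (X (n + 1) ω) ^ 2) := subadd _ _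
        _ ≤ n * σ ^ 2 + σ ^ 2 := by rw [hvar (n + 1) (by omega)]; linarith
        _ = (n + 1 : ℕ) * σ ^ 2 := by push_cast; ring
  -- the main pointwise bound
  have main : ∀ n : ℕ, 1 ≤ n → E (fun ω => |S n ω / n| ^ 2) ≤ σ ^ 2 / n := by
    intro n hn
    have hn' : (0 : ℝ) < n := by exact_mod_cast hn
    have hrewrite : (fun ω => |S n ω / n| ^ 2) =
        (1 / (n : ℝ) ^ 2) • (fun ω => (S n ω) ^ 2) := by
      funext ω
      simp only [Pi.smul_apply, smul_eq_mul, sq_abs, div_pow]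
      ring
    rw [hrewrite, poshom _ _ (by positivity)]
    calc (1 / (n : ℝ) ^ 2) * E (fun ω => (S n ω) ^ 2)
        ≤ (1 / (n : ℝ) ^ 2) * (n * σ ^ 2) := by
          apply mul_le_mul_of_nonneg_left (key n) (by positivity)
      _ = σ ^ 2 / n := by field_simp
  refine ⟨main, ?_⟩
  have hpos : ∀ n : ℕ, 0 ≤ E (fun ω => |S n ω / n| ^ 2) := by
    intro n
    have := mono 0 (fun ω => |S n ω / n| ^ 2) (fun ω => by positivity)
    rwa [E0] at this
  apply squeeze_zero' (Eventually.of_forall hpos)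
    (eventually_atTop.2 ⟨1, fun n hn => main n hn⟩)
  simpa using tendsto_const_div_atTop_nhds_zero_nat (σ ^ 2)
end

section
/- (LLN with mean μ) Let X_1, X_2, ... be random variables in H_2 with E[(X_i - μ)²] = σ̄² and E[(X_i-μ)(X_{i+j}-μ)] = E[-(X_i-μ)(X_{i+j}-μ)] = 0 for all i, j ≥ 1. Then with S_n = X_1 + ⋯ + X_n, we have E[|S_n/n - μ|²] ≤ σ̄²/n, hence lim_{n→∞} E[|S_n/n − μ|²] = 0. -/
open Filter

variable {Ω : Type*}

/-- Law of Large Numbers with mean `μ` under a sublinear expectation. -/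
theorem sublinear_LLN_mean (E : (Ω → ℝ) → ℝ)
    (mono : ∀ X Y : Ω → ℝ, (∀ ω, X ω ≤ Y ω) → E X ≤ E Y)
    (subadd : ∀ X Y : Ω → ℝ, E (X + Y) ≤ E X + E Y)
    (poshom : ∀ (l : ℝ) (X : Ω → ℝ), 0 ≤ l → E (l • X) = l * E X)
    (transl : ∀ (X : Ω → ℝ) (c : ℝ), E (X + fun _ => c) = E X + c)
    (X : ℕ → Ω → ℝ) (μ σ : ℝ) (hσ : 0 < σ)
    (hvar : ∀ i : ℕ, 1 ≤ i → E (fun ω => (X i ω - μ) ^ 2) = σ ^ 2)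
    (huncorr : ∀ i j : ℕ, 1 ≤ i → 1 ≤ j →
      E (fun ω => (X i ω - μ) * (X (i + j) ω - μ)) = 0 ∧
      E (fun ω => -((X i ω - μ) * (X (i + j) ω - μ))) = 0)
    (S : ℕ → Ω → ℝ) (hS : ∀ n, S n = fun ω => ∑ i ∈ Finset.Icc 1 n, X i ω) :
    (∀ n : ℕ, 1 ≤ n → E (fun ω => |S n ω / n - μ| ^ 2) ≤ σ ^ 2 / n) ∧
      Tendsto (fun n : ℕ => E (fun ω => |S n ω / n - μ| ^ 2)) atTop (nhds 0) := by
  have hE0 : E (fun _ => 0) = 0 := by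
    have h := poshom 0 (fun _ => 0) le_rfl
    exact (by simpa using h : E 0 = 0)
  set Y : ℕ → Ω → ℝ := fun i ω => X i ω - μ with hY
  have hsum_le : ∀ (s : Finset ℕ) (f : ℕ → Ω → ℝ),
      E (fun ω => ∑ i ∈ s, f i ω) ≤ ∑ i ∈ s, E (f i) := by
    intro s f
    induction s using Finset.induction_on with
    | empty => simp [hE0]
    | @insert a s h ih =>
      rw [Finset.sum_insert h]
      calc E (fun ω => ∑ i ∈ insert a s, f i ω)
          = E (f a + fun ω => ∑ i ∈ s, f i ω) := by
            congr 1; funext ω; simp [Finset.sum_insert h]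
        _ ≤ E (f a) + E (fun ω => ∑ i ∈ s, f i ω) := subadd _ _
        _ ≤ _ := by linarith [ih]
  have hcross : ∀ i j, 1 ≤ i → 1 ≤ j → i ≠ j →
      E (fun ω => Y i ω * Y j ω) = 0 := by
    intro i j hi hj hij
    rcases lt_or_gt_of_ne hij with h | h
    · have h1 := (huncorr i (j - i) hi (by omega)).1
      have hji : i + (j - i) = j := by omega
      rw [hji] at h1
      exact h1
    · have h1 := (huncorr j (i - j) hj (by omega)).1
      have hji : j + (i - j) = i := by omega
      rw [hji] at h1
      calc E (fun ω => Y i ω * Y j ω) = E (fun ω => Y j ω * Y i ω) := by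
            congr 1; funext ω; ring
        _ = 0 := h1
  have key : ∀ n : ℕ, 1 ≤ n → E (fun ω => |S n ω / n - μ| ^ 2) ≤ σ ^ 2 / n := by
    intro n hn
    have hn0 : (0:ℝ) < n := by exact_mod_cast Nat.pos_of_ne_zero (by omega)
    have hcard : (Finset.Icc 1 n).card = n := by simp
    have hrw : (fun ω => |S n ω / n - μ| ^ 2)
        = ((1 / (n:ℝ))^2) • (fun ω => (∑ i ∈ Finset.Icc 1 n, Y i ω) * (∑ i ∈ Finset.Icc 1 n, Y i ω)) := by
      funext ω
      have hSn : S n ω = (∑ i ∈ Finset.Icc 1 n, Y i ω) + n * μ := by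
        rw [hS]
        simp only [hY]
        rw [Finset.sum_sub_distrib]
        simp [hcard]
      simp only [Pi.smul_apply, smul_eq_mul]
      rw [sq_abs, hSn]
      field_simp
      ring
    rw [hrw, poshom _ _ (by positivity)]
    have hexp : (fun ω => (∑ i ∈ Finset.Icc 1 n, Y i ω) * (∑ i ∈ Finset.Icc 1 n, Y i ω))
        = (fun ω => ∑ i ∈ Finset.Icc 1 n, ∑ j ∈ Finset.Icc 1 n, Y i ω * Y j ω) := by
      funext ω
      rw [Finset.sum_mul_sum]
    rw [hexp]
    have hinner : ∀ i ∈ Finset.Icc 1 n,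
        ∑ j ∈ Finset.Icc 1 n, E (fun ω => Y i ω * Y j ω) = σ ^ 2 := by
      intro i hi
      have hi1 : 1 ≤ i := (Finset.mem_Icc.mp hi).1
      rw [Finset.sum_eq_single i]
      · have : (fun ω => Y i ω * Y i ω) = (fun ω => (X i ω - μ) ^ 2) := by
          funext ω; simp [hY]; ring
        rw [this, hvar i hi1]
      · intro j hj hne
        exact hcross i j hi1 (Finset.mem_Icc.mp hj).1 (Ne.symm hne)
      · intro h; exact absurd hi h
    have hEle : E (fun ω => ∑ i ∈ Finset.Icc 1 n, ∑ j ∈ Finset.Icc 1 n, Y i ω * Y j ω)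
        ≤ (n:ℝ) * σ ^ 2 := by
      calc E (fun ω => ∑ i ∈ Finset.Icc 1 n, ∑ j ∈ Finset.Icc 1 n, Y i ω * Y j ω)
          ≤ ∑ i ∈ Finset.Icc 1 n, E (fun ω => ∑ j ∈ Finset.Icc 1 n, Y i ω * Y j ω) :=
            hsum_le _ _
        _ ≤ ∑ i ∈ Finset.Icc 1 n, ∑ j ∈ Finset.Icc 1 n, E (fun ω => Y i ω * Y j ω) := by
            apply Finset.sum_le_sum
            intro i _
            exact hsum_le _ _
        _ = ∑ i ∈ Finset.Icc 1 n, σ ^ 2 := Finset.sum_congr rfl hinner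
        _ = (n:ℝ) * σ ^ 2 := by rw [Finset.sum_const, hcard]; simp [mul_comm]
    calc (1 / (n:ℝ))^2 * E (fun ω => ∑ i ∈ Finset.Icc 1 n, ∑ j ∈ Finset.Icc 1 n, Y i ω * Y j ω)
        ≤ (1 / (n:ℝ))^2 * ((n:ℝ) * σ ^ 2) := by
          apply mul_le_mul_of_nonneg_left hEle (by positivity)
      _ = σ ^ 2 / n := by field_simp
  refine ⟨key, ?_⟩
  have hlow : ∀ n : ℕ, 0 ≤ E (fun ω => |S n ω / n - μ| ^ 2) := by
    intro n
    calc (0:ℝ) = E (fun _ => 0) := hE0.symm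
      _ ≤ _ := mono _ _ (fun ω => by positivity)
  have htend : Tendsto (fun n : ℕ => σ ^ 2 / (n:ℝ)) atTop (nhds 0) :=
    tendsto_const_div_atTop_nhds_zero_nat _
  exact squeeze_zero' (Eventually.of_forall hlow)
    (eventually_atTop.2 ⟨1, fun n hn => key n hn⟩) htend
end
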